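/- Let G be a group acting on a set M, and H ≤ G a subgroup such that M = ⋃_{g∈G} M^{gHg⁻¹} and H is maximal among isotropy-related subgroups in the sense that for all g ∈ G, either M^{gHg⁻¹} = M^H or M^{gHg⁻¹} ∩ M^H = ∅, with M^{gHg⁻¹} = M^H if and only if g ∈ N(H). Then M is the disjoint union over cosets [g] ∈ G/N(H) of the sets g·M^H, and each g·M^H = M^{gHg⁻¹}. -/

import Mathlib

/-- The fixed-point set of a subgroup `K` acting on `M`. -/
def fixedSet {G : Type*} (M : Type*) [Group G] [MulAction G M] (K : Subgroup G) : Set M :=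
  {x : M | ∀ k ∈ K, k • x = x}

/-- The conjugate subgroup `gHg⁻¹`. -/
def conjSub {G : Type*} [Group G] (g : G) (H : Subgroup G) : Subgroup G :=
  Subgroup.map (MulAut.conj g).toMonoidHom H

/-- Conner–Floyd decomposition: if `M` is covered by the fixed sets of the conjugates of a
maximal subgroup `H`, then `M` is the disjoint union, indexed by the cosets of the
normalizer `N(H)`, of the translates `g·M^H = M^{gHg⁻¹}`. -/

theorem key {G M : Type*} [Group G] [MulAction G M] (H : Subgroup G) (g : G) :
    (fun x => g • x) '' fixedSet M H = fixedSet M (conjSub g H) := by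
  ext x
  constructor
  · rintro ⟨y, hy, rfl⟩
    rintro k ⟨h, hh, rfl⟩
    simp only [MulEquiv.coe_toMonoidHom, MulAut.conj_apply, mul_smul]
    rw [inv_smul_smul, hy h hh]
  · intro hx
    refine ⟨g⁻¹ • x, fun h hh => ?_, by simp⟩
    have := hx (g * h * g⁻¹) ⟨h, hh, rfl⟩
    simp only [mul_smul] at this ⊢
    conv_rhs => rw [← this]
    rw [inv_smul_smul]

theorem stmt11 {G M : Type*} [Group G] [MulAction G M] (H : Subgroup G)
    (hcover : ∀ x : M, ∃ g : G, x ∈ fixedSet M (conjSub g H))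
    (hmax : ∀ g : G, fixedSet M (conjSub g H) = fixedSet M H ∨
      fixedSet M (conjSub g H) ∩ fixedSet M H = ∅)
    (hnorm : ∀ g : G, fixedSet M (conjSub g H) = fixedSet M H ↔ g ∈ Subgroup.normalizer (H : Set G)) :
    (∀ g : G, (fun x => g • x) '' fixedSet M H = fixedSet M (conjSub g H)) ∧
    (∀ g₁ g₂ : G, g₁⁻¹ * g₂ ∈ Subgroup.normalizer (H : Set G) →
      (fun x => g₁ • x) '' fixedSet M H = (fun x => g₂ • x) '' fixedSet M H) ∧
    (∀ g₁ g₂ : G, g₁⁻¹ * g₂ ∉ Subgroup.normalizer (H : Set G) →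
      ((fun x => g₁ • x) '' fixedSet M H) ∩ ((fun x => g₂ • x) '' fixedSet M H) = ∅) ∧
    (∀ x : M, ∃ g : G, x ∈ (fun x => g • x) '' fixedSet M H) := by
  have key2 : ∀ g : G, (fun x => g • x) '' fixedSet M H = fixedSet M (conjSub g H) :=
    fun g => key H g
  refine ⟨key2, ?_, ?_, ?_⟩
  · intro g₁ g₂ hn
    have h1 : fixedSet M (conjSub (g₁⁻¹ * g₂) H) = fixedSet M H := (hnorm _).2 hn
    have : (fun x => (g₁⁻¹ * g₂) • x) '' fixedSet M H = fixedSet M H := by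
      rw [key2, h1]
    calc (fun x => g₁ • x) '' fixedSet M H
        = (fun x => g₁ • x) '' ((fun x => (g₁⁻¹ * g₂) • x) '' fixedSet M H) := by rw [this]
      _ = (fun x => g₂ • x) '' fixedSet M H := by
          rw [← Set.image_comp]; funext x; simp [mul_smul]
  · intro g₁ g₂ hn
    have h1 : fixedSet M (conjSub (g₁⁻¹ * g₂) H) ∩ fixedSet M H = ∅ :=
      (hmax _).resolve_left (fun h => hn ((hnorm _).1 h))
    rw [← key2 (g₁⁻¹ * g₂)] at h1
    have himg : (fun x => g₁ • x) '' (((fun x => (g₁⁻¹ * g₂) • x) '' fixedSet M H) ∩ fixedSet M H)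
        = ((fun x => g₂ • x) '' fixedSet M H) ∩ ((fun x => g₁ • x) '' fixedSet M H) := by
      rw [Set.image_inter (MulAction.injective g₁), ← Set.image_comp]
      congr 1; funext x; simp [mul_smul]
    rw [h1, Set.image_empty] at himg
    rw [Set.inter_comm, himg]
  · intro x
    obtain ⟨g, hg⟩ := hcover x
    exact ⟨g, by rw [key2]; exact hg⟩
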